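/- Type A level-restricted path space at level 1: let g be of type A_{n-1}^{(1)}, B = B^{k_L,1} ⊗ ... ⊗ B^{k_1,1} a tensor product of column crystals, and Λ, Λ' ∈ P_cl⁺ of level 1. Then the set P(B,Λ,Λ') of paths b ∈ B with b ⊗ u_Λ a highest weight vector of weight Λ' contains at most one element. -/

import Mathlib

open scoped Classical

/-- Iterate a partial map `m` times. -/
def pIter {B : Type*} (g : B → Option B) : ℕ → B → Option B
  | 0, b => some b
  | n+1, b => (g b).bind (pIter g n)

/-- Cyclic predecessor in `Fin n`. -/
def predF {n : ℕ} (c : Fin n) : Fin n := c - ⟨1 % n, Nat.mod_lt 1 c.pos⟩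

/-- A column of the crystal `B^{k,1}` of type `A_{n-1}^{(1)}` is a `k`-element
subset of `{1,…,n}` (encoded `Finset (Fin n)`).  The affine raising operator
`e_c` (colors `c ∈ {0,1,…,n-1}`, with `0` the affine color) replaces the letter
`c` by `predF c` (cyclically). -/
def eCol (n : ℕ) (c : Fin n) (S : Finset (Fin n)) : Option (Finset (Fin n)) :=
  if c ∈ S ∧ predF c ∉ S then some (insert (predF c) (S.erase c)) else none

/-- The lowering operator `f_c` replaces the letter `predF c` by `c`. -/
def fCol (n : ℕ) (c : Fin n) (S : Finset (Fin n)) : Option (Finset (Fin n)) :=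
  if predF c ∈ S ∧ c ∉ S then some (insert c (S.erase (predF c))) else none

/-- `ε_c` of a column. -/
def epsCol (n : ℕ) (c : Fin n) (S : Finset (Fin n)) : ℕ :=
  if c ∈ S ∧ predF c ∉ S then 1 else 0

/-- `φ_c` of a column. -/
def phiCol (n : ℕ) (c : Fin n) (S : Finset (Fin n)) : ℕ :=
  if predF c ∈ S ∧ c ∉ S then 1 else 0

/-- `φ_c` of a tensor product `b_L ⊗ ⋯ ⊗ b_1 ⊗ u` of columns (head of the list is
the leftmost factor `b_L`) where the rightmost factor `u` has `φ_c(u) = lam c` and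
`ε_c(u) = 0`:  `φ(b₂ ⊗ b₁) = φ(b₂) + max(0, φ(b₁) - ε(b₂))`. -/
def phiPath (n : ℕ) (lam : Fin n → ℕ) (c : Fin n) : List (Finset (Fin n)) → ℕ
  | [] => lam c
  | x :: l => phiCol n c x + (phiPath n lam c l - epsCol n c x)

/-- `ε_c` of a tensor product of columns (against the same rightmost factor `u`):
`ε(b₂ ⊗ b₁) = ε(b₁) + max(0, ε(b₂) - φ(b₁))`. -/
def epsPath (n : ℕ) (lam : Fin n → ℕ) (c : Fin n) : List (Finset (Fin n)) → ℕ
  | [] => 0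
  | x :: l => epsPath n lam c l + (epsCol n c x - phiPath n lam c l)

/-- Number of occurrences of the letter `a` in the path. -/
def countLetter (n : ℕ) (p : List (Finset (Fin n))) (a : Fin n) : ℕ :=
  (p.map (fun S => if a ∈ S then 1 else 0)).sum

-- ===== auxiliary lemmas =====

open Fin.NatCast

lemma predF_eq {n : ℕ} [NeZero n] (c : Fin n) : predF c = c - 1 := by
  have h : (⟨1 % n, Nat.mod_lt 1 c.pos⟩ : Fin n) = 1 := by
    ext
    simp [Fin.val_one']
  rw [predF, h]

lemma val_sub_one_of_ne {n : ℕ} [NeZero n] (a : Fin n) :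
    (a - 1).val = if a.val = 0 then n - 1 else a.val - 1 := by
  have hn : 0 < n := Nat.pos_of_ne_zero (NeZero.ne n)
  have ha := a.isLt
  rw [Fin.sub_def]
  simp only [Fin.val_one']
  by_cases h1 : n = 1
  · subst h1; simp
  · have h2 : 2 ≤ n := by omega
    have hm : 1 % n = 1 := Nat.mod_eq_of_lt h2
    rw [hm]
    split_ifs with h0
    · rw [h0]
      simp [Nat.mod_eq_of_lt (show n - 1 < n by omega)]
    · have : n - 1 + a.val = (a.val - 1) + n := by omega
      rw [this, Nat.add_mod_right, Nat.mod_eq_of_lt (by omega)]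

lemma downclosed_eq_range (H : Finset ℕ) (h : ∀ m, m + 1 ∈ H → m ∈ H) :
    H = Finset.range H.card := by
  have hdc : ∀ a, a ∈ H → ∀ b, b ≤ a → b ∈ H := by
    intro a
    induction a with
    | zero =>
      intro ha b hb
      have hb0 : b = 0 := Nat.le_zero.mp hb
      rwa [hb0]
    | succ a ih =>
      intro ha b hb
      rcases Nat.eq_or_lt_of_le hb with h1 | h1
      · exact h1 ▸ ha
      · exact ih (h a ha) b (by omega)
  have hsub : H ⊆ Finset.range H.card := by
    intro m hm
    rw [Finset.mem_range]
    have hr : Finset.range (m + 1) ⊆ H := by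
      intro b hb
      rw [Finset.mem_range] at hb
      exact hdc m hm b (by omega)
    have := Finset.card_le_card hr
    rw [Finset.card_range] at this
    omega
  exact Finset.eq_of_subset_of_card_le hsub (Finset.card_range H.card).le

lemma mem_iff_of_closed {n : ℕ} [NeZero n] (S : Finset (Fin n)) (s : Fin n)
    (hcl : ∀ c ∈ S, c ≠ s → c - 1 ∈ S) (c : Fin n) :
    c ∈ S ↔ (c - s).val < S.card := by
  classical
  have hinj : Function.Injective (fun c : Fin n => (c - s).val) := by
    intro a b hab
    have : a - s = b - s := Fin.val_injective hab
    exact sub_left_injective this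
  have hcard : (S.image (fun c : Fin n => (c - s).val)).card = S.card :=
    Finset.card_image_of_injective S hinj
  have hdc : ∀ m, m + 1 ∈ S.image (fun c : Fin n => (c - s).val) →
      m ∈ S.image (fun c : Fin n => (c - s).val) := by
    intro m hm
    rw [Finset.mem_image] at hm
    obtain ⟨a, ha, hav⟩ := hm
    have hane : a ≠ s := by
      intro h; subst h
      simp [sub_self] at hav
    have ha1 : a - 1 ∈ S := hcl a ha hane
    rw [Finset.mem_image]
    refine ⟨a - 1, ha1, ?_⟩
    have h1 : a - 1 - s = a - s - 1 := sub_right_comm a 1 s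
    simp only [h1, val_sub_one_of_ne]
    rw [if_neg (by omega)]
    omega
  have hrange : S.image (fun c : Fin n => (c - s).val) = Finset.range S.card := by
    rw [← hcard]
    exact downclosed_eq_range _ hdc
  constructor
  · intro hc
    have h2 : (c - s).val ∈ S.image (fun c : Fin n => (c - s).val) :=
      Finset.mem_image_of_mem _ hc
    rw [hrange, Finset.mem_range] at h2
    exact h2
  · intro hc
    have h2 : (c - s).val ∈ S.image (fun c : Fin n => (c - s).val) := by
      rw [hrange, Finset.mem_range]; exact hc
    rw [Finset.mem_image] at h2
    obtain ⟨a, ha, hav⟩ := h2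
    have : a = c := hinj hav
    exact this ▸ ha

lemma phi_step {n : ℕ} [NeZero n] (S : Finset (Fin n)) (s : Fin n)
    (hmem : ∀ c, c ∈ S ↔ (c - s).val < S.card) (c : Fin n) :
    phiCol n c S + ((if c = s then 1 else 0) - epsCol n c S) =
      (if c = s + (S.card : Fin n) then 1 else 0) := by
  have hn : 0 < n := Nat.pos_of_ne_zero (NeZero.ne n)
  set k := S.card with hk
  have hkn : k ≤ n := by
    have := Finset.card_le_univ S
    simpa using this
  have hpred : predF c = c - 1 := predF_eq c
  unfold phiCol epsCol
  rw [hpred]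
  set d := (c - s).val with hd
  have hdn : d < n := (c - s).isLt
  have hcs : (c = s) ↔ d = 0 := by
    rw [← sub_eq_zero, hd, Fin.ext_iff, Fin.val_zero]
  have hck : (c = s + (k : Fin n)) ↔ d = k % n := by
    rw [← sub_eq_iff_eq_add', Fin.ext_iff, Fin.val_natCast, ← hd]
  have hmc : c ∈ S ↔ d < k := hmem c
  have hsub : c - 1 - s = c - s - 1 := sub_right_comm c 1 s
  have hmc1 : (c - 1) ∈ S ↔ (if d = 0 then n - 1 else d - 1) < k := by
    rw [hmem (c - 1), hsub, val_sub_one_of_ne, ← hd]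
  have hmod : k % n = if k = n then 0 else k := by
    split_ifs with h
    · simp [h]
    · exact Nat.mod_eq_of_lt (by omega)
  simp only [hmc, hmc1, hcs, hck, hmod]
  split_ifs <;> omega

lemma eps_cons_zero {n : ℕ} (lam : Fin n → ℕ) (c : Fin n) (x : Finset (Fin n))
    (l : List (Finset (Fin n))) :
    epsPath n lam c (x :: l) = 0 ↔
      epsPath n lam c l = 0 ∧ epsCol n c x ≤ phiPath n lam c l := by
  show epsPath n lam c l + (epsCol n c x - phiPath n lam c l) = 0 ↔ _
  omega

lemma col_closed {n : ℕ} [NeZero n] (x : Finset (Fin n)) (s : Fin n)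
    (h : ∀ c, epsCol n c x ≤ (if c = s then 1 else 0)) :
    ∀ c ∈ x, c ≠ s → c - 1 ∈ x := by
  intro c hc hne
  have := h c
  rw [if_neg hne] at this
  unfold epsCol at this
  rw [predF_eq] at this
  by_contra hco
  rw [if_pos ⟨hc, hco⟩] at this
  omega

lemma phiPath_hw {n : ℕ} [NeZero n] (s : Fin n) :
    ∀ (l : List (Finset (Fin n))),
      (∀ c, epsPath n (fun c => if c = s then 1 else 0) c l = 0) →
      ∀ c, phiPath n (fun c => if c = s then 1 else 0) c l =
        (if c = s + (((l.map Finset.card).sum : ℕ) : Fin n) then 1 else 0) := by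
  intro l
  induction l with
  | nil =>
    intro _ c
    simp [phiPath]
  | cons x l ih =>
    intro h c
    have htail : ∀ c, epsPath n (fun c => if c = s then 1 else 0) c l = 0 :=
      fun c => ((eps_cons_zero _ c x l).mp (h c)).1
    have hcolle : ∀ c, epsCol n c x ≤ phiPath n (fun c => if c = s then 1 else 0) c l :=
      fun c => ((eps_cons_zero _ c x l).mp (h c)).2
    have hphil := ih htail
    set s' : Fin n := s + (((l.map Finset.card).sum : ℕ) : Fin n) with hs'
    have hcolle' : ∀ c, epsCol n c x ≤ (if c = s' then 1 else 0) := by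
      intro c; rw [← hphil c]; exact hcolle c
    have hmem := mem_iff_of_closed x s' (col_closed x s' hcolle')
    have hstep := phi_step x s' hmem c
    show phiCol n c x + (phiPath n _ c l - epsCol n c x) = _
    rw [hphil c, hstep]
    congr 1
    rw [hs', List.map_cons, List.sum_cons, add_assoc, Nat.cast_add, add_comm ((x.card : Fin n))]

lemma path_unique {n : ℕ} [NeZero n] (s : Fin n) :
    ∀ (l m : List (Finset (Fin n))),
      l.map Finset.card = m.map Finset.card →
      (∀ c, epsPath n (fun c => if c = s then 1 else 0) c l = 0) →
      (∀ c, epsPath n (fun c => if c = s then 1 else 0) c m = 0) →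
      l = m := by
  intro l
  induction l with
  | nil =>
    intro m hmap _ _
    cases m with
    | nil => rfl
    | cons y m' => simp at hmap
  | cons x l ih =>
    intro m hmap hl hm
    cases m with
    | nil => simp at hmap
    | cons y m' =>
      simp only [List.map_cons, List.cons.injEq] at hmap
      obtain ⟨hcard, hmaps⟩ := hmap
      have htl : ∀ c, epsPath n (fun c => if c = s then 1 else 0) c l = 0 :=
        fun c => ((eps_cons_zero _ c x l).mp (hl c)).1
      have htm : ∀ c, epsPath n (fun c => if c = s then 1 else 0) c m' = 0 :=
        fun c => ((eps_cons_zero _ c y m').mp (hm c)).1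
      have hphl := phiPath_hw s l htl
      have hphm := phiPath_hw s m' htm
      have hsums : (l.map Finset.card).sum = (m'.map Finset.card).sum := by rw [hmaps]
      set s' : Fin n := s + (((l.map Finset.card).sum : ℕ) : Fin n) with hs'
      have hxle : ∀ c, epsCol n c x ≤ (if c = s' then 1 else 0) := by
        intro c
        rw [← hphl c]
        exact ((eps_cons_zero _ c x l).mp (hl c)).2
      have hyle : ∀ c, epsCol n c y ≤ (if c = s' then 1 else 0) := by
        intro c
        have := ((eps_cons_zero _ c y m').mp (hm c)).2
        rw [hphm c] at this
        rw [← hsums] at this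
        exact this
      have hmx := mem_iff_of_closed x s' (col_closed x s' hxle)
      have hmy := mem_iff_of_closed y s' (col_closed y s' hyle)
      have hxy : x = y := by
        ext c
        rw [hmx c, hmy c, hcard]
      rw [hxy, ih m' hmaps htl htm]

/-- for `g` of type `A_{n-1}^{(1)}`, `B = B^{k_L,1} ⊗ ⋯ ⊗ B^{k_1,1}`
a tensor product of column crystals and `Λ = Λ_r`, `Λ' = Λ_{r'}` level-one
weights, the set `P(B,Λ,Λ')` of paths `b ∈ B` such that `b ⊗ u_Λ` is a highest
weight vector (`ε_i(b ⊗ u_Λ) = 0` for all colors `i`) of weight `Λ'` (i.e.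
`Λ + wt(b) = Λ'` in `P_cl`, expressed via letter contents modulo `(1,…,1)`)
contains at most one element.  Paths are recorded as `p : Fin L → Finset (Fin n)`
with `p 0` the leftmost factor `b_L`. -/
theorem level_one_restricted_path_unique
    (n L : ℕ) (hn : 1 ≤ n) (k : Fin L → ℕ) (r r' : Fin n)
    (p q : Fin L → Finset (Fin n))
    (hpshape : ∀ j, (p j).card = k j) (hqshape : ∀ j, (q j).card = k j)
    (hphw : ∀ c : Fin n,
      epsPath n (fun c => if c = r then 1 else 0) c (List.ofFn p) = 0)
    (hqhw : ∀ c : Fin n,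
      epsPath n (fun c => if c = r then 1 else 0) c (List.ofFn q) = 0)
    (hpwt : ∃ cst : ℤ, ∀ a : Fin n,
      (countLetter n (List.ofFn p) a : ℤ) + (if a.val < r.val then 1 else 0) =
        (if a.val < r'.val then 1 else 0) + cst)
    (hqwt : ∃ cst : ℤ, ∀ a : Fin n,
      (countLetter n (List.ofFn q) a : ℤ) + (if a.val < r.val then 1 else 0) =
        (if a.val < r'.val then 1 else 0) + cst) :
    p = q := by
  haveI : NeZero n := ⟨by omega⟩
  have hmap : (List.ofFn p).map Finset.card = (List.ofFn q).map Finset.card := by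
    rw [List.map_ofFn, List.map_ofFn]
    congr 1
    funext j
    simp [Function.comp, hpshape j, hqshape j]
  have := path_unique r (List.ofFn p) (List.ofFn q) hmap hphw hqhw
  exact List.ofFn_inj.mp this
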